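/- arXiv:2306.13494 — 6 statements merged into one kernel-verified Lean document; each statement's English description precedes it below -/
import Mathlib

section
/- Under the substitution (u,v) = φ(s,t) := (st, s²t(1−t)), the map φ satisfies φ([0,1]×[0,1]) ⊆ Δ ⊆ φ([0,2]×[0,1]), where Δ = {(u,v) : 0 ≤ v ≤ u ≤ 1}, and the Jacobian determinant of φ is s²t. -/
open Set

/-- For `φ(s,t) := (st, s²t(1−t))` one has
`φ([0,1]×[0,1]) ⊆ Δ ⊆ φ([0,2]×[0,1])` with `Δ = {(u,v) : 0 ≤ v ≤ u ≤ 1}`,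
and the Jacobian determinant of `φ` has absolute value `s²t`. -/
theorem stmt3
    (φ : ℝ × ℝ → ℝ × ℝ)
    (hφ : ∀ q : ℝ × ℝ, φ q = (q.1 * q.2, q.1 ^ 2 * q.2 * (1 - q.2)))
    (Δ : Set (ℝ × ℝ))
    (hΔ : Δ = {q : ℝ × ℝ | 0 ≤ q.2 ∧ q.2 ≤ q.1 ∧ q.1 ≤ 1}) :
    φ '' (Icc (0:ℝ) 1 ×ˢ Icc (0:ℝ) 1) ⊆ Δ ∧
    Δ ⊆ φ '' (Icc (0:ℝ) 2 ×ˢ Icc (0:ℝ) 1) ∧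
    ∀ q : ℝ × ℝ, 0 ≤ q.1 → 0 ≤ q.2 →
      |(fderiv ℝ φ q (1, 0)).1 * (fderiv ℝ φ q (0, 1)).2 -
        (fderiv ℝ φ q (1, 0)).2 * (fderiv ℝ φ q (0, 1)).1| = q.1 ^ 2 * q.2 := by
  have hφ' : φ = fun q : ℝ × ℝ => (q.1 * q.2, q.1 * q.1 * q.2 * (1 - q.2)) := by
    funext q; rw [hφ]; ring_nf
  subst hφ' hΔ
  refine ⟨?_, ?_, ?_⟩
  · rintro p ⟨⟨s, t⟩, hmem, rfl⟩
    simp only [mem_prod, mem_Icc] at hmem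
    obtain ⟨⟨hs0, hs1⟩, ht0, ht1⟩ := hmem
    simp only [mem_setOf_eq]
    have e1 : (0:ℝ) ≤ 1 - t := by linarith
    have e2 : (0:ℝ) ≤ 1 - s := by linarith
    refine ⟨by nlinarith [mul_nonneg (mul_nonneg (mul_nonneg hs0 hs0) ht0) e1],
      by nlinarith [mul_nonneg (mul_nonneg hs0 ht0) e2,
        mul_nonneg (mul_nonneg (mul_nonneg hs0 hs0) ht0) ht0],
      by nlinarith [mul_nonneg hs0 ht0, mul_nonneg (mul_nonneg hs0 ht0) e2]⟩
  · rintro ⟨u, v⟩ ⟨hv0, hvu, hu1⟩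
    by_cases hu : u = 0
    · refine ⟨(0, 0), ⟨⟨le_refl _, by norm_num⟩, le_refl _, by norm_num⟩, ?_⟩
      have hv : v = 0 := le_antisymm (by simpa [hu] using hvu) hv0
      simp [hu, hv]
    · have hupos : 0 < u := lt_of_le_of_ne (hv0.trans hvu) (Ne.symm hu)
      have hden : 0 < u ^ 2 + v := by positivity
      refine ⟨((u ^ 2 + v) / u, u ^ 2 / (u ^ 2 + v)), ⟨⟨by positivity, ?_⟩, by positivity, ?_⟩, ?_⟩
      · rw [div_le_iff₀ hupos]; nlinarith
      · rw [div_le_one hden]; nlinarith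
      · refine Prod.ext ?_ ?_ <;> field_simp <;> ring
  · intro q h1 h2
    have hf : HasFDerivAt (fun p : ℝ × ℝ => p.1) (ContinuousLinearMap.fst ℝ ℝ ℝ) q :=
      hasFDerivAt_fst
    have hg : HasFDerivAt (fun p : ℝ × ℝ => p.2) (ContinuousLinearMap.snd ℝ ℝ ℝ) q :=
      hasFDerivAt_snd
    have HA := hf.mul hg
    have HB := ((hf.mul hf).mul hg).mul ((hasFDerivAt_const (1 : ℝ) q).sub hg)
    have H : HasFDerivAt (fun q : ℝ × ℝ => (q.1 * q.2, q.1 * q.1 * q.2 * (1 - q.2))) _ q :=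
      HasFDerivAt.prodMk HA HB
    rw [HasFDerivAt.fderiv H]
    simp only [ContinuousLinearMap.prod_apply, ContinuousLinearMap.add_apply,
      ContinuousLinearMap.smul_apply, ContinuousLinearMap.coe_fst',
      ContinuousLinearMap.coe_snd', ContinuousLinearMap.coe_sub',
      ContinuousLinearMap.coe_smul', Pi.sub_apply, Pi.smul_apply, smul_eq_mul]
    have h3 : 0 ≤ q.1 ^ 2 * q.2 := by positivity
    rw [show q.1 ^ 2 * q.2 = |(-(q.1 ^ 2 * q.2))| from by rw [abs_neg, abs_of_nonneg h3]]
    congr 1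
    simp
    ring
end

section
/- For real a, b, c and p ≥ 1, the integral ∫_Δ |a u³v² + b u⁵v + c u⁷|^p / (uv + u³)^{(8/3)p} du dv over Δ = {(u,v) : 0 ≤ v ≤ u ≤ 1} with p = 3 is finite only if a = b = c = 0. -/
open MeasureTheory Set

/-- `C/u` is not lintegrable on `(0,1]` for `C > 0`. -/
lemma aux_inv_lintegral_top (C : ℝ) (hC : 0 < C) :
    ¬ (∫⁻ u in Ioc (0:ℝ) 1, ENNReal.ofReal (C * u⁻¹)) < ⊤ := by
  intro hfin
  have hmeas : Measurable fun u : ℝ => C * u⁻¹ := measurable_const.mul measurable_inv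
  have hnn : 0 ≤ᵐ[volume.restrict (Ioc (0:ℝ) 1)] fun u : ℝ => C * u⁻¹ := by
    filter_upwards [ae_restrict_mem measurableSet_Ioc] with u hu
    have := hu.1
    positivity
  have hint : IntegrableOn (fun u : ℝ => C * u⁻¹) (Ioc 0 1) :=
    ⟨hmeas.aestronglyMeasurable, (hasFiniteIntegral_iff_ofReal hnn).mpr hfin⟩
  have hinv : IntegrableOn (fun u : ℝ => u⁻¹) (Ioc 0 1) := by
    have h2 := hint.const_mul C⁻¹
    have : (fun u : ℝ => C⁻¹ * (C * u⁻¹)) = fun u : ℝ => u⁻¹ := by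
      funext u; rw [← mul_assoc, inv_mul_cancel₀ hC.ne', one_mul]
    rwa [this] at h2
  have hIoo : IntegrableOn (fun u : ℝ => u⁻¹) (Ioo 0 1) :=
    hinv.mono Ioo_subset_Ioc_self le_rfl
  have hii : IntervalIntegrable (fun u : ℝ => u⁻¹) volume 0 1 :=
    (intervalIntegrable_iff_integrableOn_Ioo_of_le zero_le_one).mpr hIoo
  rcases intervalIntegrable_inv_iff.mp hii with h | h
  · norm_num at h
  · exact h (by simp)

set_option maxHeartbeats 1000000 in
/-- For `p = 3`, finiteness of
`∫_Δ |a u³v² + b u⁵v + c u⁷|³ / (uv + u³)⁸` over the triangle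
`Δ = {(u,v) : 0 ≤ v ≤ u ≤ 1}` forces `a = b = c = 0`. -/
theorem stmt4 (a b c : ℝ)
    (h : (∫⁻ q in {q : ℝ × ℝ | 0 ≤ q.2 ∧ q.2 ≤ q.1 ∧ q.1 ≤ 1},
        ENNReal.ofReal (|a * q.1 ^ 3 * q.2 ^ 2 + b * q.1 ^ 5 * q.2 + c * q.1 ^ 7| ^ 3 /
          (q.1 * q.2 + q.1 ^ 3) ^ 8)) < ⊤) :
    a = 0 ∧ b = 0 ∧ c = 0 := by
  set P : ℝ → ℝ := fun s => a * s ^ 2 + b * s + c with hPdef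
  have key : ∀ t ∈ Ioo (0:ℝ) 1, P t = 0 := by
    intro t ht
    by_contra hP
    have hPc : Continuous P := by fun_prop
    have hUopen : IsOpen {s : ℝ | |P t| / 2 < |P s| ∧ s ∈ Ioo (0:ℝ) 1} :=
      (isOpen_lt continuous_const hPc.abs).inter isOpen_Ioo
    have hPt : 0 < |P t| := abs_pos.mpr hP
    have htU : t ∈ {s : ℝ | |P t| / 2 < |P s| ∧ s ∈ Ioo (0:ℝ) 1} :=
      ⟨by linarith, ht⟩
    obtain ⟨r, hr, hball⟩ := Metric.isOpen_iff.mp hUopen t htU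
    set ε : ℝ := |P t| / 2 with hεdef
    have hε : 0 < ε := by positivity
    obtain ⟨t₁, htt₁, ht₁half⟩ : ∃ t₁, t < t₁ ∧ t₁ ≤ t + r / 2 :=
      ⟨t + r / 2, by linarith, le_rfl⟩
    have hball' : ∀ s ∈ Icc t t₁, ε < |P s| ∧ s ∈ Ioo (0:ℝ) 1 := by
      intro s hs
      apply hball
      rw [Metric.mem_ball, Real.dist_eq, abs_of_nonneg (by linarith [hs.1])]
      have := hs.2
      linarith
    have ht₁mem := hball' t₁ ⟨htt₁.le, le_rfl⟩
    have ht₁lt : t₁ < 1 := ht₁mem.2.2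
    -- the strip
    set S : Set (ℝ × ℝ) :=
      {q : ℝ × ℝ | q.1 ∈ Ioc (0:ℝ) 1 ∧ q.2 ∈ Icc (t * q.1 ^ 2) (t₁ * q.1 ^ 2)} with hSdef
    have hSmeas : MeasurableSet S := by
      apply MeasurableSet.inter
      · exact (measurable_fst (measurableSet_Ioc (a := (0:ℝ)) (b := 1)))
      · exact MeasurableSet.inter
          (measurableSet_le (by fun_prop) measurable_snd)
          (measurableSet_le measurable_snd (by fun_prop))
    have hSsub : S ⊆ {q : ℝ × ℝ | 0 ≤ q.2 ∧ q.2 ≤ q.1 ∧ q.1 ≤ 1} := by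
      rintro ⟨u, v⟩ ⟨⟨hu0, hu1⟩, hv1, hv2⟩
      have ht0 : 0 < t := ht.1
      refine ⟨by nlinarith, by nlinarith, hu1⟩
    -- pointwise lower bound on S
    have hpt : ∀ q ∈ S,
        ENNReal.ofReal (ε ^ 3 / 256 * (q.1 ^ 3)⁻¹) ≤
        ENNReal.ofReal (|a * q.1 ^ 3 * q.2 ^ 2 + b * q.1 ^ 5 * q.2 + c * q.1 ^ 7| ^ 3 /
          (q.1 * q.2 + q.1 ^ 3) ^ 8) := by
      rintro ⟨u, v⟩ ⟨⟨hu0, hu1⟩, hv1, hv2⟩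
      apply ENNReal.ofReal_le_ofReal
      have hu2 : (0:ℝ) < u ^ 2 := by positivity
      have hs1 : t ≤ v / u ^ 2 := (le_div_iff₀ hu2).mpr (by linarith)
      have hs2 : v / u ^ 2 ≤ t₁ := (div_le_iff₀ hu2).mpr (by linarith)
      have hPs := (hball' (v / u ^ 2) ⟨hs1, hs2⟩).1
      have hNeq : a * u ^ 3 * v ^ 2 + b * u ^ 5 * v + c * u ^ 7 = u ^ 7 * P (v / u ^ 2) := by
        simp only [hPdef]
        field_simp
      have hNabs : |a * u ^ 3 * v ^ 2 + b * u ^ 5 * v + c * u ^ 7| = u ^ 7 * |P (v / u ^ 2)| := by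
        rw [hNeq, abs_mul, abs_of_nonneg (by positivity)]
      have hv0 : 0 ≤ v := le_trans (by nlinarith [ht.1]) hv1
      have hDpos : (0:ℝ) < u * v + u ^ 3 := by positivity
      have hDle : u * v + u ^ 3 ≤ 2 * u ^ 3 := by
        have h1 : u * v ≤ u * (t₁ * u ^ 2) := mul_le_mul_of_nonneg_left hv2 hu0.le
        nlinarith [mul_pos hu0 hu2]
      have heq : ε ^ 3 / 256 * (u ^ 3)⁻¹ = (ε * u ^ 7) ^ 3 / (2 * u ^ 3) ^ 8 := by
        field_simp
        ring
      rw [heq]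
      apply div_le_div₀ (by positivity) _ (by positivity) (by
        apply pow_le_pow_left₀ hDpos.le hDle)
      · rw [hNabs]
        apply pow_le_pow_left₀ (by positivity)
        nlinarith [pow_pos hu0 7, hPs.le]
    -- computation of the strip integral
    set C : ℝ := ε ^ 3 / 256 * ((t₁ - t)) with hCdef
    have hCpos : 0 < C := by
      have : 0 < t₁ - t := by linarith
      positivity
    have hcomp : (∫⁻ q in S, ENNReal.ofReal (ε ^ 3 / 256 * (q.1 ^ 3)⁻¹)) =
        ∫⁻ u in Ioc (0:ℝ) 1, ENNReal.ofReal (C * u⁻¹) := by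
      have hfmeas : Measurable fun q : ℝ × ℝ =>
          ENNReal.ofReal (ε ^ 3 / 256 * (q.1 ^ 3)⁻¹) := by fun_prop
      rw [← lintegral_indicator hSmeas]
      rw [Measure.volume_eq_prod, lintegral_prod _ ((hfmeas.indicator hSmeas).aemeasurable)]
      rw [← lintegral_indicator measurableSet_Ioc]
      congr 1
      funext u
      by_cases hu : u ∈ Ioc (0:ℝ) 1
      · have : (fun v => S.indicator
            (fun q : ℝ × ℝ => ENNReal.ofReal (ε ^ 3 / 256 * (q.1 ^ 3)⁻¹)) (u, v)) =
            (Icc (t * u ^ 2) (t₁ * u ^ 2)).indicator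
              (fun _ => ENNReal.ofReal (ε ^ 3 / 256 * (u ^ 3)⁻¹)) := by
          funext v
          simp only [indicator_apply, hSdef, mem_setOf_eq, hu, true_and]
        rw [this, lintegral_indicator measurableSet_Icc, setLIntegral_const,
          Real.volume_Icc, indicator_of_mem hu]
        rw [← ENNReal.ofReal_mul (mul_nonneg (div_nonneg (pow_nonneg hε.le 3) (by norm_num))
          (inv_nonneg.2 (pow_nonneg hu.1.le 3)))]
        congr 1
        have hu0 := hu.1
        rw [hCdef]
        field_simp
      · have : (fun v => S.indicator
            (fun q : ℝ × ℝ => ENNReal.ofReal (ε ^ 3 / 256 * (q.1 ^ 3)⁻¹)) (u, v)) =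
            fun _ => 0 := by
          funext v
          simp only [indicator_apply, hSdef, mem_setOf_eq]
          rw [if_neg]
          rintro ⟨hu', -⟩
          exact hu hu'
        rw [this, lintegral_zero, indicator_of_notMem hu]
    -- conclude
    have hchain : (∫⁻ u in Ioc (0:ℝ) 1, ENNReal.ofReal (C * u⁻¹)) ≤
        (∫⁻ q in {q : ℝ × ℝ | 0 ≤ q.2 ∧ q.2 ≤ q.1 ∧ q.1 ≤ 1},
        ENNReal.ofReal (|a * q.1 ^ 3 * q.2 ^ 2 + b * q.1 ^ 5 * q.2 + c * q.1 ^ 7| ^ 3 /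
          (q.1 * q.2 + q.1 ^ 3) ^ 8)) := by
      rw [← hcomp]
      calc (∫⁻ q in S, ENNReal.ofReal (ε ^ 3 / 256 * (q.1 ^ 3)⁻¹))
          ≤ ∫⁻ q in S,
            ENNReal.ofReal (|a * q.1 ^ 3 * q.2 ^ 2 + b * q.1 ^ 5 * q.2 + c * q.1 ^ 7| ^ 3 /
              (q.1 * q.2 + q.1 ^ 3) ^ 8) := setLIntegral_mono' hSmeas hpt
        _ ≤ _ := lintegral_mono_set hSsub
    exact aux_inv_lintegral_top C hCpos (lt_of_le_of_lt hchain h)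
  -- finish: evaluate P at three points
  have h1 := key (1/4) (by norm_num)
  have h2 := key (1/2) (by norm_num)
  have h3 := key (3/4) (by norm_num)
  simp only [hPdef] at h1 h2 h3
  norm_num at h1 h2 h3
  refine ⟨by linarith, by linarith, by linarith⟩
end

section
/- Via the substitution (u,v) = (st, s²t(1−t)), one has ∫_Δ |a u³v² + b u⁵v + c u⁷|³/(uv+u³)⁸ du dv ≥ (∫₀¹ s⁻¹ ds) · (∫₀¹ |a + (b−2a)t + (a−b+c)t²|³ dt), where the first factor is +∞; hence finiteness of the left side forces the quadratic polynomial a + (b−2a)t + (a−b+c)t² to vanish identically, i.e. a = b = c = 0. -/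
open MeasureTheory Set

noncomputable def myL (A B C D : ℝ) : ℝ × ℝ →L[ℝ] ℝ × ℝ :=
  ((A • (ContinuousLinearMap.fst ℝ ℝ ℝ) + B • (ContinuousLinearMap.snd ℝ ℝ ℝ)).prod
   (C • (ContinuousLinearMap.fst ℝ ℝ ℝ) + D • (ContinuousLinearMap.snd ℝ ℝ ℝ)))

lemma myL_apply (A B C D : ℝ) (v : ℝ × ℝ) :
    myL A B C D v = (A * v.1 + B * v.2, C * v.1 + D * v.2) := by
  simp [myL, smul_eq_mul]

lemma myL_det (A B C D : ℝ) : (myL A B C D).det = A * D - B * C := by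
  have : (myL A B C D : ℝ × ℝ →ₗ[ℝ] ℝ × ℝ) =
      Matrix.toLin (Module.Basis.finTwoProd ℝ) (Module.Basis.finTwoProd ℝ) !![A, B; C, D] := by
    apply (Module.Basis.finTwoProd ℝ).ext
    intro i
    fin_cases i <;>
      simp [myL_apply, Matrix.toLin_apply, Module.Basis.finTwoProd, Fin.sum_univ_two, Matrix.vecHead, Matrix.vecTail, LinearEquiv.finTwoArrow] <;> norm_num
  rw [ContinuousLinearMap.det, this, LinearMap.det_toLin, Matrix.det_fin_two_of]

noncomputable def phi (q : ℝ × ℝ) : ℝ × ℝ := (q.1 * q.2, q.1 * q.1 * q.2 * (1 - q.2))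

lemma phi_hasFDerivAt (p : ℝ × ℝ) :
    HasFDerivAt phi
      (myL p.2 p.1 (2 * p.1 * p.2 * (1 - p.2)) (p.1 ^ 2 * (1 - 2 * p.2))) p := by
  have h1 : HasFDerivAt (fun q : ℝ × ℝ => q.1 * q.2)
      (p.1 • ContinuousLinearMap.snd ℝ ℝ ℝ + p.2 • ContinuousLinearMap.fst ℝ ℝ ℝ) p :=
    (hasFDerivAt_fst (p := p)).mul (hasFDerivAt_snd (p := p))
  have hff : HasFDerivAt (fun q : ℝ × ℝ => q.1 * q.1)
      (p.1 • ContinuousLinearMap.fst ℝ ℝ ℝ + p.1 • ContinuousLinearMap.fst ℝ ℝ ℝ) p :=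
    (hasFDerivAt_fst (p := p)).mul (hasFDerivAt_fst (p := p))
  have h2a : HasFDerivAt (fun q : ℝ × ℝ => q.1 * q.1 * q.2)
      ((p.1 * p.1) • ContinuousLinearMap.snd ℝ ℝ ℝ +
        p.2 • (p.1 • ContinuousLinearMap.fst ℝ ℝ ℝ + p.1 • ContinuousLinearMap.fst ℝ ℝ ℝ)) p :=
    hff.mul (hasFDerivAt_snd (p := p))
  have h2b : HasFDerivAt (fun q : ℝ × ℝ => 1 - q.2)
      ((0 : ℝ × ℝ →L[ℝ] ℝ) - ContinuousLinearMap.snd ℝ ℝ ℝ) p :=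
    (hasFDerivAt_const (1 : ℝ) p).sub (hasFDerivAt_snd (p := p))
  have h2 := h2a.mul h2b
  refine (h1.prodMk h2).congr_fderiv ?_
  apply ContinuousLinearMap.ext
  rintro ⟨x, y⟩
  simp [myL_apply, Prod.ext_iff]
  constructor <;> ring

lemma int_inv_top : (∫⁻ s in Ioo (0:ℝ) 1, ENNReal.ofReal s⁻¹) = ⊤ := by
  by_contra h
  have hfin : (∫⁻ s in Ioo (0:ℝ) 1, ENNReal.ofReal s⁻¹) < ⊤ := lt_top_iff_ne_top.2 h
  have hint : IntegrableOn (fun s : ℝ => s⁻¹) (Ioo 0 1) := by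
    refine ⟨measurable_inv.aestronglyMeasurable, ?_⟩
    rw [hasFiniteIntegral_iff_norm]
    have : ∫⁻ s in Ioo (0:ℝ) 1, ENNReal.ofReal ‖s⁻¹‖ =
        ∫⁻ s in Ioo (0:ℝ) 1, ENNReal.ofReal s⁻¹ := by
      refine setLIntegral_congr_fun measurableSet_Ioo (fun x hx => ?_)
      rw [Real.norm_eq_abs, abs_of_pos (inv_pos.2 hx.1)]
    rw [this]; exact hfin
  have hint2 : IntegrableOn (fun s : ℝ => s ^ (-1 : ℝ)) (Ioo (0:ℝ) 1) := by
    refine hint.congr_fun (fun x hx => ?_) measurableSet_Ioo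
    rw [show ((-1 : ℝ)) = ((-1 : ℤ) : ℝ) by norm_num, Real.rpow_intCast, zpow_neg_one]
  have := (intervalIntegral.integrableOn_Ioo_rpow_iff one_pos).1 hint2
  linarith

lemma coeffs_zero (a b c : ℝ)
    (h : (∫⁻ t in Ioo (0:ℝ) 1,
        ENNReal.ofReal (|a + (b - 2 * a) * t + (a - b + c) * t ^ 2| ^ 3)) = 0) :
    a = 0 ∧ b = 0 ∧ c = 0 := by
  set P : ℝ → ℝ := fun t => a + (b - 2 * a) * t + (a - b + c) * t ^ 2 with hP
  have hm : Measurable fun t : ℝ => ENNReal.ofReal (|P t| ^ 3) := by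
    apply ENNReal.measurable_ofReal.comp
    exact ((continuous_abs.comp (by continuity)).pow 3).measurable
  have hae := (lintegral_eq_zero_iff hm).1 h
  rw [Filter.EventuallyEq, ae_restrict_iff' measurableSet_Ioo] at hae
  set N := {x : ℝ | ¬ (x ∈ Ioo (0:ℝ) 1 → ENNReal.ofReal (|P x| ^ 3) = 0)} with hN
  have hNnull : volume N = 0 := by simpa [hN] using ae_iff.1 hae
  set Z := Ioo (0:ℝ) 1 \ N with hZ
  have hZmeas : volume Z = 1 := by
    rw [hZ, measure_diff_null hNnull, Real.volume_Ioo]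
    norm_num
  have hZinf : Z.Infinite := by
    intro hfin
    rw [hfin.measure_zero] at hZmeas
    exact zero_ne_one hZmeas
  have hroot : ∀ x ∈ Z, P x = 0 := by
    intro x hx
    have h1 : ENNReal.ofReal (|P x| ^ 3) = 0 := by
      have := not_not.1 (fun hc => hx.2 hc)
      simpa using this hx.1
    have h2 : |P x| ^ 3 ≤ 0 := ENNReal.ofReal_eq_zero.1 h1
    have h3 : |P x| ^ 3 = 0 := le_antisymm h2 (by positivity)
    have := pow_eq_zero_iff (n := 3) (by norm_num) |>.1 h3
    exact abs_eq_zero.1 this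
  set p : Polynomial ℝ :=
    Polynomial.C a + Polynomial.C (b - 2 * a) * Polynomial.X +
      Polynomial.C (a - b + c) * Polynomial.X ^ 2 with hp
  have hp0 : p = 0 := by
    apply Polynomial.eq_zero_of_infinite_isRoot
    apply Set.Infinite.mono _ hZinf
    intro x hx
    have := hroot x hx
    simp only [mem_setOf_eq, Polynomial.IsRoot, hp]
    simp only [Polynomial.eval_add, Polynomial.eval_mul, Polynomial.eval_C,
      Polynomial.eval_X, Polynomial.eval_pow]
    exact this
  have c0 : p.coeff 0 = a := by
    rw [hp]; simp only [Polynomial.coeff_add, Polynomial.coeff_C_mul,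
      Polynomial.coeff_X_pow, Polynomial.coeff_X, Polynomial.coeff_C]; norm_num
  have c1 : p.coeff 1 = b - 2 * a := by
    rw [hp]; simp only [Polynomial.coeff_add, Polynomial.coeff_C_mul,
      Polynomial.coeff_X_pow, Polynomial.coeff_X, Polynomial.coeff_C]; norm_num
  have c2 : p.coeff 2 = a - b + c := by
    rw [hp]; simp only [Polynomial.coeff_add, Polynomial.coeff_C_mul,
      Polynomial.coeff_X_pow, Polynomial.coeff_X, Polynomial.coeff_C]; norm_num
  rw [hp0] at c0 c1 c2
  simp only [Polynomial.coeff_zero] at c0 c1 c2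
  refine ⟨c0.symm, ?_, ?_⟩ <;> linarith

lemma main_ineq (a b c : ℝ) :
    (∫⁻ q in {q : ℝ × ℝ | 0 ≤ q.2 ∧ q.2 ≤ q.1 ∧ q.1 ≤ 1},
        ENNReal.ofReal (|a * q.1 ^ 3 * q.2 ^ 2 + b * q.1 ^ 5 * q.2 + c * q.1 ^ 7| ^ 3 /
          (q.1 * q.2 + q.1 ^ 3) ^ 8)) ≥
      (∫⁻ s in Ioo (0:ℝ) 1, ENNReal.ofReal s⁻¹) *
        (∫⁻ t in Ioo (0:ℝ) 1,
          ENNReal.ofReal (|a + (b - 2 * a) * t + (a - b + c) * t ^ 2| ^ 3)) := by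
  set F : ℝ × ℝ → ENNReal := fun q =>
    ENNReal.ofReal (|a * q.1 ^ 3 * q.2 ^ 2 + b * q.1 ^ 5 * q.2 + c * q.1 ^ 7| ^ 3 /
      (q.1 * q.2 + q.1 ^ 3) ^ 8) with hF
  set S : Set (ℝ × ℝ) := Ioo (0:ℝ) 1 ×ˢ Ioo (0:ℝ) 1 with hS
  have hSm : MeasurableSet S := measurableSet_Ioo.prod measurableSet_Ioo
  -- injectivity
  have hinj : InjOn phi S := by
    rintro ⟨s₁, t₁⟩ ⟨hs₁, ht₁⟩ ⟨s₂, t₂⟩ ⟨hs₂, ht₂⟩ heq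
    simp only [phi, Prod.mk.injEq] at heq
    obtain ⟨h1, h2⟩ := heq
    simp only [mem_Ioo] at hs₁ ht₁ hs₂ ht₂
    have hu : 0 < s₁ * t₁ := mul_pos hs₁.1 ht₁.1
    have key : s₁ * (s₁ * t₁) - (s₁ * t₁) ^ 2 = s₂ * (s₁ * t₁) - (s₁ * t₁) ^ 2 := by
      have e1 : s₁ * (s₁ * t₁) - (s₁ * t₁) ^ 2 = s₁ * s₁ * t₁ * (1 - t₁) := by ring
      have e2 : s₂ * (s₂ * t₂) - (s₂ * t₂) ^ 2 = s₂ * s₂ * t₂ * (1 - t₂) := by ring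
      rw [e1, h2, ← e2, ← h1]
    have hs : s₁ = s₂ := by
      have := sub_eq_sub_iff_sub_eq_sub.1 key
      have h3 : s₁ * (s₁ * t₁) = s₂ * (s₁ * t₁) := by linarith
      exact mul_right_cancel₀ (ne_of_gt hu) h3
    have ht : t₁ = t₂ := by
      have : s₁ * t₁ = s₁ * t₂ := by rw [h1, hs]
      exact mul_left_cancel₀ (ne_of_gt hs₁.1) this
    simp [hs, ht]
  -- image is inside the triangle
  have himg : phi '' S ⊆ {q : ℝ × ℝ | 0 ≤ q.2 ∧ q.2 ≤ q.1 ∧ q.1 ≤ 1} := by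
    rintro q ⟨⟨s, t⟩, ⟨hs, ht⟩, rfl⟩
    simp only [mem_Ioo] at hs ht
    obtain ⟨hs1, hs2⟩ := hs
    obtain ⟨ht1, ht2⟩ := ht
    refine ⟨?_, ?_, ?_⟩
    · show (0:ℝ) ≤ s * s * t * (1 - t)
      have h1t : (0:ℝ) ≤ 1 - t := by linarith
      positivity
    · show s * s * t * (1 - t) ≤ s * t
      nlinarith [mul_pos hs1 ht1, mul_nonneg hs1.le (sub_nonneg.2 ht2.le)]
    · show s * t ≤ 1
      nlinarith
  -- change of variables
  have hder : ∀ x ∈ S, HasFDerivWithinAt phi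
      (myL x.2 x.1 (2 * x.1 * x.2 * (1 - x.2)) (x.1 ^ 2 * (1 - 2 * x.2))) S x :=
    fun x _ => (phi_hasFDerivAt x).hasFDerivWithinAt
  have hcov := lintegral_image_eq_lintegral_abs_det_fderiv_mul volume hSm hder hinj F
  have step1 : (∫⁻ q in {q : ℝ × ℝ | 0 ≤ q.2 ∧ q.2 ≤ q.1 ∧ q.1 ≤ 1}, F q) ≥
      ∫⁻ q in phi '' S, F q := lintegral_mono_set himg
  rw [hcov] at step1
  refine le_trans (le_of_eq ?_) step1
  -- simplify the transformed integrand and split as a product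
  have hptwise : ∀ x ∈ S,
      ENNReal.ofReal |(myL x.2 x.1 (2 * x.1 * x.2 * (1 - x.2)) (x.1 ^ 2 * (1 - 2 * x.2))).det| *
        F (phi x) =
      ENNReal.ofReal x.1⁻¹ *
        ENNReal.ofReal (|a + (b - 2 * a) * x.2 + (a - b + c) * x.2 ^ 2| ^ 3) := by
    rintro ⟨s, t⟩ ⟨hs, ht⟩
    simp only [mem_Ioo] at hs ht
    obtain ⟨hs1, hs2⟩ := hs
    obtain ⟨ht1, ht2⟩ := ht
    rw [myL_det]
    have hdet : t * (s ^ 2 * (1 - 2 * t)) - s * (2 * s * t * (1 - t)) = -(s ^ 2 * t) := by ring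
    rw [hdet, abs_neg, abs_of_pos (by positivity : (0:ℝ) < s ^ 2 * t)]
    have hnum : a * (s * t) ^ 3 * (s * s * t * (1 - t)) ^ 2 + b * (s * t) ^ 5 * (s * s * t * (1 - t)) +
        c * (s * t) ^ 7 = s ^ 7 * t ^ 5 * (a + (b - 2 * a) * t + (a - b + c) * t ^ 2) := by ring
    have hden : (s * t) * (s * s * t * (1 - t)) + (s * t) ^ 3 = s ^ 3 * t ^ 2 := by ring
    have hFphi : F (phi (s, t)) = ENNReal.ofReal
        ((s ^ 7 * t ^ 5 * |a + (b - 2 * a) * t + (a - b + c) * t ^ 2|) ^ 3 / (s ^ 3 * t ^ 2) ^ 8) := by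
      simp only [hF, phi]
      congr 1
      rw [hnum, hden, abs_mul, abs_of_pos (by positivity : (0:ℝ) < s ^ 7 * t ^ 5)]
    rw [hFphi, ← ENNReal.ofReal_mul (by positivity), ← ENNReal.ofReal_mul (by positivity)]
    congr 1
    have hs0 : s ≠ 0 := ne_of_gt hs1
    have ht0 : t ≠ 0 := ne_of_gt ht1
    field_simp
  rw [setLIntegral_congr_fun hSm hptwise]
  -- split the product integral
  have hf : Measurable fun x : ℝ => ENNReal.ofReal x⁻¹ :=
    ENNReal.measurable_ofReal.comp measurable_inv
  have hg : Measurable fun t : ℝ =>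
      ENNReal.ofReal (|a + (b - 2 * a) * t + (a - b + c) * t ^ 2| ^ 3) := by
    apply ENNReal.measurable_ofReal.comp
    exact ((continuous_abs.comp (by continuity)).pow 3).measurable
  rw [hS, show (volume : Measure (ℝ × ℝ)) = (volume : Measure ℝ).prod volume from
    rfl, ← Measure.prod_restrict]
  rw [lintegral_prod_mul hf.aemeasurable hg.aemeasurable]


/-- Via the substitution `(u,v) = (st, s²t(1−t))`:
`∫_Δ |a u³v² + b u⁵v + c u⁷|³/(uv+u³)⁸ ≥ (∫₀¹ s⁻¹ ds) · (∫₀¹ |a+(b−2a)t+(a−b+c)t²|³ dt)`,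
the first factor being `+∞`; hence finiteness of the left side forces `a = b = c = 0`. -/
theorem stmt5 (a b c : ℝ) :
    (∫⁻ q in {q : ℝ × ℝ | 0 ≤ q.2 ∧ q.2 ≤ q.1 ∧ q.1 ≤ 1},
        ENNReal.ofReal (|a * q.1 ^ 3 * q.2 ^ 2 + b * q.1 ^ 5 * q.2 + c * q.1 ^ 7| ^ 3 /
          (q.1 * q.2 + q.1 ^ 3) ^ 8)) ≥
      (∫⁻ s in Ioo (0:ℝ) 1, ENNReal.ofReal s⁻¹) *
        (∫⁻ t in Ioo (0:ℝ) 1,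
          ENNReal.ofReal (|a + (b - 2 * a) * t + (a - b + c) * t ^ 2| ^ 3)) ∧
    (∫⁻ s in Ioo (0:ℝ) 1, ENNReal.ofReal s⁻¹) = ⊤ ∧
    ((∫⁻ q in {q : ℝ × ℝ | 0 ≤ q.2 ∧ q.2 ≤ q.1 ∧ q.1 ≤ 1},
        ENNReal.ofReal (|a * q.1 ^ 3 * q.2 ^ 2 + b * q.1 ^ 5 * q.2 + c * q.1 ^ 7| ^ 3 /
          (q.1 * q.2 + q.1 ^ 3) ^ 8)) < ⊤ → a = 0 ∧ b = 0 ∧ c = 0) := by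
  refine ⟨main_ineq a b c, int_inv_top, fun hlt => ?_⟩
  have h := main_ineq a b c
  rw [int_inv_top] at h
  have hY : (∫⁻ t in Ioo (0:ℝ) 1,
      ENNReal.ofReal (|a + (b - 2 * a) * t + (a - b + c) * t ^ 2| ^ 3)) = 0 := by
    by_contra hY
    rw [ENNReal.top_mul hY] at h
    exact absurd (top_le_iff.1 h) (ne_of_lt hlt)
  exact coeffs_zero a b c hY
end

section
/- Let μ : [0,1]² → ℝ be a polynomial of the form μ(u,v) = 4uv + 2βu³ + 2γv³ + ν(u,v) with β, γ > 0, where ν(u,v) = O(u²v + uv² + (u+v)⁴) near the origin, and suppose μ > 0 on [0,1]² \ {(0,0)}. Then there exist constants c₁, c₂ > 0 such that c₁(uv + u³) ≤ μ(u,v) ≤ c₂(uv + u³) for all (u,v) in the triangle Δ = {(u,v) ∈ [0,1]² : v ≤ u}. -/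
open Set

set_option maxHeartbeats 1000000

/-- Lemma on the Jacobian determinant: if
`μ(u,v) = 4uv + 2βu³ + 2γv³ + ν(u,v)` with `β, γ > 0`,
`ν = O(u²v + uv² + (u+v)⁴)` near the origin, `ν` continuous, and `μ > 0` on
`[0,1]² \ {(0,0)}`, then there are constants `c₁, c₂ > 0` with
`c₁(uv + u³) ≤ μ(u,v) ≤ c₂(uv + u³)` on the triangle `Δ = {(u,v) ∈ [0,1]² : v ≤ u}`. -/
theorem stmt7 (β γ : ℝ) (hβ : 0 < β) (hγ : 0 < γ) (ν μ : ℝ × ℝ → ℝ)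
    (hνc : ContinuousOn ν (Icc (0:ℝ) 1 ×ˢ Icc (0:ℝ) 1))
    (hνO : ∃ C δ : ℝ, 0 < δ ∧ ∀ q ∈ Icc (0:ℝ) 1 ×ˢ Icc (0:ℝ) 1, ‖q‖ < δ →
      |ν q| ≤ C * (q.1 ^ 2 * q.2 + q.1 * q.2 ^ 2 + (q.1 + q.2) ^ 4))
    (hμ : ∀ q : ℝ × ℝ, μ q = 4 * q.1 * q.2 + 2 * β * q.1 ^ 3 + 2 * γ * q.2 ^ 3 + ν q)
    (hpos : ∀ q ∈ (Icc (0:ℝ) 1 ×ˢ Icc (0:ℝ) 1) \ {((0:ℝ), (0:ℝ))}, 0 < μ q) :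
    ∃ c₁ > (0:ℝ), ∃ c₂ > (0:ℝ), ∀ q ∈ Icc (0:ℝ) 1 ×ˢ Icc (0:ℝ) 1, q.2 ≤ q.1 →
      c₁ * (q.1 * q.2 + q.1 ^ 3) ≤ μ q ∧ μ q ≤ c₂ * (q.1 * q.2 + q.1 ^ 3) := by
  obtain ⟨C₀, δ, hδ, hν⟩ := hνO
  set C : ℝ := |C₀| + 1 with hC
  have hCpos : 0 < C := by positivity
  have hν' : ∀ q ∈ Icc (0:ℝ) 1 ×ˢ Icc (0:ℝ) 1, ‖q‖ < δ →
      |ν q| ≤ C * (q.1 ^ 2 * q.2 + q.1 * q.2 ^ 2 + (q.1 + q.2) ^ 4) := by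
    intro q hq hqn
    refine (hν q hq hqn).trans ?_
    have h1 : 0 ≤ q.1 := hq.1.1
    have h2 : 0 ≤ q.2 := hq.2.1
    have hX : 0 ≤ q.1 ^ 2 * q.2 + q.1 * q.2 ^ 2 + (q.1 + q.2) ^ 4 := by positivity
    have : C₀ ≤ C := by simp only [hC]; nlinarith [le_abs_self C₀]
    nlinarith
  set m : ℝ := min 4 (2*β) with hm
  have hmpos : 0 < m := lt_min (by norm_num) (by linarith)
  have hm4 : m ≤ 4 := min_le_left _ _
  have hmβ : m ≤ 2*β := min_le_right _ _
  set M : ℝ := max 4 (2*β + 2*γ) with hM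
  have hM4 : (4:ℝ) ≤ M := le_max_left _ _
  have hMβγ : 2*β + 2*γ ≤ M := le_max_right _ _
  set δ' : ℝ := min (δ/2) (min 1 (m/(32*C))) with hδ'
  have hδ'pos : 0 < δ' := lt_min (by linarith) (lt_min one_pos (by positivity))
  have hδ'1 : δ' ≤ 1 := (min_le_right _ _).trans (min_le_left _ _)
  have hδ'δ : δ' ≤ δ/2 := min_le_left _ _
  have hδ'm : 32 * C * δ' ≤ m := by
    have h : δ' ≤ m/(32*C) := (min_le_right _ _).trans (min_le_right _ _)
    calc 32 * C * δ' ≤ 32 * C * (m/(32*C)) := by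
          apply mul_le_mul_of_nonneg_left h (by positivity)
      _ = m := by field_simp
  -- continuity of μ
  have hμc : ContinuousOn μ (Icc (0:ℝ) 1 ×ˢ Icc (0:ℝ) 1) := by
    have : μ = fun q : ℝ × ℝ =>
        4 * q.1 * q.2 + 2 * β * q.1 ^ 3 + 2 * γ * q.2 ^ 3 + ν q := funext hμ
    rw [this]
    have hc : Continuous fun q : ℝ × ℝ =>
        4 * q.1 * q.2 + 2 * β * q.1 ^ 3 + 2 * γ * q.2 ^ 3 := by fun_prop
    exact hc.continuousOn.add hνc
  -- compact region away from origin
  set K : Set (ℝ × ℝ) := (Icc (0:ℝ) 1 ×ˢ Icc (0:ℝ) 1) ∩ {q : ℝ × ℝ | δ' ≤ q.1} with hK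
  have hKc : IsCompact K :=
    (isCompact_Icc.prod isCompact_Icc).inter_right
      (isClosed_le continuous_const continuous_fst)
  have hKne : K.Nonempty := ⟨(δ', δ'),
    ⟨⟨⟨hδ'pos.le, hδ'1⟩, ⟨hδ'pos.le, hδ'1⟩⟩, by simp⟩⟩
  have hKsub : K ⊆ Icc (0:ℝ) 1 ×ˢ Icc (0:ℝ) 1 := inter_subset_left
  obtain ⟨q₀, hq₀K, hq₀min⟩ := hKc.exists_isMinOn hKne (hμc.mono hKsub)
  obtain ⟨q₁, hq₁K, hq₁max⟩ := hKc.exists_isMaxOn hKne (hμc.mono hKsub)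
  have hεpos : 0 < μ q₀ := by
    refine hpos q₀ ⟨hKsub hq₀K, ?_⟩
    intro h
    have : δ' ≤ q₀.1 := hq₀K.2
    rw [mem_singleton_iff] at h
    rw [h] at this
    exact absurd this (by simpa using hδ'pos)
  have hBε : μ q₀ ≤ μ q₁ := hq₀min hq₁K
  have hBpos : 0 < μ q₁ := lt_of_lt_of_le hεpos hBε
  refine ⟨min (m/2) (μ q₀ / 2), lt_min (by linarith) (by linarith),
    max (M + m/2) (μ q₁ / δ'^3), lt_of_lt_of_le (by positivity : (0:ℝ) < μ q₁ / δ'^3)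
      (le_max_right _ _), ?_⟩
  intro q hq hvu
  obtain ⟨⟨hu0, hu1⟩, hv0, hv1⟩ := hq
  have hc₁m : min (m/2) (μ q₀ / 2) ≤ m/2 := min_le_left _ _
  have hc₁ε : min (m/2) (μ q₀ / 2) ≤ μ q₀ / 2 := min_le_right _ _
  have hc₂M : M + m/2 ≤ max (M + m/2) (μ q₁ / δ'^3) := le_max_left _ _
  have hc₂B : μ q₁ / δ'^3 ≤ max (M + m/2) (μ q₁ / δ'^3) := le_max_right _ _
  rw [hμ q]
  rcases lt_or_ge q.1 δ' with hcase | hcase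
  · -- near origin
    have hqn : ‖q‖ < δ := by
      have : ‖q‖ = max |q.1| |q.2| := rfl
      rw [this, abs_of_nonneg hu0, abs_of_nonneg hv0]
      have : max q.1 q.2 = q.1 := max_eq_left hvu
      rw [this]; linarith
    have hνb := hν' q ⟨⟨hu0, hu1⟩, hv0, hv1⟩ hqn
    have h4 : 0 ≤ q.1 * q.2 := mul_nonneg hu0 hv0
    have h5 : 0 ≤ q.1 ^ 3 := by positivity
    have hkey : |ν q| ≤ (m/2) * (q.1 * q.2 + q.1 ^ 3) := by
      have h1 : q.1 ^ 2 * q.2 ≤ δ' * (q.1 * q.2) := by nlinarith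
      have h2 : q.1 * q.2 ^ 2 ≤ δ' * (q.1 * q.2) := by nlinarith
      have h3a : (q.1 + q.2) ^ 4 ≤ (2 * q.1) ^ 4 :=
        pow_le_pow_left₀ (by linarith) (by linarith) 4
      have h3 : (q.1 + q.2) ^ 4 ≤ 16 * δ' * q.1 ^ 3 := by
        nlinarith [mul_nonneg (sub_nonneg.mpr hcase.le) (pow_nonneg hu0 3)]
      calc |ν q| ≤ C * (q.1 ^ 2 * q.2 + q.1 * q.2 ^ 2 + (q.1 + q.2) ^ 4) := hνb
        _ ≤ C * (δ' * (q.1 * q.2) + δ' * (q.1 * q.2) + 16 * δ' * q.1 ^ 3) := by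
            apply mul_le_mul_of_nonneg_left (by linarith) hCpos.le
        _ = (32 * C * δ') * (q.1 * q.2 / 16 + q.1 ^ 3 / 2) := by ring
        _ ≤ m * (q.1 * q.2 / 16 + q.1 ^ 3 / 2) :=
            mul_le_mul_of_nonneg_right hδ'm (by positivity)
        _ ≤ (m/2) * (q.1 * q.2 + q.1 ^ 3) := by nlinarith [mul_nonneg hmpos.le h4]
    have habs := abs_le.mp hkey
    constructor
    · have p1 : 0 ≤ (4 - m) * (q.1 * q.2) := mul_nonneg (by linarith) h4
      have p2 : 0 ≤ (2 * β - m) * q.1 ^ 3 := mul_nonneg (by linarith) h5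
      have p3 : 0 ≤ 2 * γ * q.2 ^ 3 := by positivity
      have hlow : m * (q.1 * q.2 + q.1 ^ 3) ≤
          4 * q.1 * q.2 + 2 * β * q.1 ^ 3 + 2 * γ * q.2 ^ 3 := by nlinarith
      have hc : min (m/2) (μ q₀ / 2) * (q.1 * q.2 + q.1 ^ 3) ≤
          (m/2) * (q.1 * q.2 + q.1 ^ 3) :=
        mul_le_mul_of_nonneg_right hc₁m (by positivity)
      linarith [habs.1]
    · have hv3 : q.2 ^ 3 ≤ q.1 ^ 3 := pow_le_pow_left₀ hv0 hvu 3
      have p1 : 0 ≤ (M - 4) * (q.1 * q.2) := mul_nonneg (by linarith) h4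
      have p2 : 0 ≤ (M - 2 * β - 2 * γ) * q.1 ^ 3 := mul_nonneg (by linarith) h5
      have p3 : 2 * γ * q.2 ^ 3 ≤ 2 * γ * q.1 ^ 3 := by nlinarith
      have hhigh : 4 * q.1 * q.2 + 2 * β * q.1 ^ 3 + 2 * γ * q.2 ^ 3 ≤
          M * (q.1 * q.2 + q.1 ^ 3) := by nlinarith
      have hc : (M + m/2) * (q.1 * q.2 + q.1 ^ 3) ≤
          max (M + m/2) (μ q₁ / δ'^3) * (q.1 * q.2 + q.1 ^ 3) :=
        mul_le_mul_of_nonneg_right hc₂M (by positivity)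
      linarith [habs.2]
  · -- away from origin: q ∈ K
    have hqK : q ∈ K := ⟨⟨⟨hu0, hu1⟩, hv0, hv1⟩, hcase⟩
    have hμlow : μ q₀ ≤ μ q := hq₀min hqK
    have hμhigh : μ q ≤ μ q₁ := hq₁max hqK
    have h4 : 0 ≤ q.1 * q.2 := mul_nonneg hu0 hv0
    have h5 : 0 ≤ q.1 ^ 3 := by positivity
    have hs2 : q.1 * q.2 + q.1 ^ 3 ≤ 2 := by
      have := mul_le_one₀ hu1 hv0 hv1
      have : q.1 ^ 3 ≤ 1 := pow_le_one₀ hu0 hu1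
      linarith
    have hs1 : δ' ^ 3 ≤ q.1 * q.2 + q.1 ^ 3 := by
      have : δ' ^ 3 ≤ q.1 ^ 3 := pow_le_pow_left₀ hδ'pos.le hcase 3
      linarith
    rw [← hμ q]
    constructor
    · calc min (m/2) (μ q₀ / 2) * (q.1 * q.2 + q.1 ^ 3)
          ≤ (μ q₀ / 2) * 2 := by
            apply mul_le_mul hc₁ε hs2 (by linarith) (by linarith)
        _ = μ q₀ := by ring
        _ ≤ μ q := hμlow
    · calc μ q ≤ μ q₁ := hμhigh
        _ = (μ q₁ / δ'^3) * δ'^3 := by field_simp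
        _ ≤ max (M + m/2) (μ q₁ / δ'^3) * (q.1 * q.2 + q.1 ^ 3) := by
            apply mul_le_mul hc₂B hs1 (by positivity)
              (le_trans (by positivity) hc₂B)
end

section
/- Let μ(u,v) = 4uv + 2βu³ + 2γv³ + ν(u,v) be a real polynomial with remainder ν of order O(u²v + uv² + (u+v)⁴), and suppose μ does not vanish on [0,1]² \ {(0,0)}. Then β > 0. -/
open Set

/-- If `μ(u,v) = 4uv + 2βu³ + 2γv³ + ν(u,v)` (with `ν = O(u²v + uv² + (u+v)⁴)`
near the origin, `ν` continuous, and `β ≠ 0` as guaranteed by Property (iii)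
of a D-map) does not vanish on `[0,1]² \ {(0,0)}`, then `β > 0`. -/
theorem stmt9 (β γ : ℝ) (hβ : β ≠ 0) (ν μ : ℝ × ℝ → ℝ)
    (hνc : ContinuousOn ν (Icc (0:ℝ) 1 ×ˢ Icc (0:ℝ) 1))
    (hνO : ∃ C δ : ℝ, 0 < δ ∧ ∀ q ∈ Icc (0:ℝ) 1 ×ˢ Icc (0:ℝ) 1, ‖q‖ < δ →
      |ν q| ≤ C * (q.1 ^ 2 * q.2 + q.1 * q.2 ^ 2 + (q.1 + q.2) ^ 4))
    (hμ : ∀ q : ℝ × ℝ, μ q = 4 * q.1 * q.2 + 2 * β * q.1 ^ 3 + 2 * γ * q.2 ^ 3 + ν q)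
    (hnz : ∀ q ∈ (Icc (0:ℝ) 1 ×ˢ Icc (0:ℝ) 1) \ {((0:ℝ), (0:ℝ))}, μ q ≠ 0) :
    0 < β := by
  by_contra hb
  have hβneg : β < 0 := lt_of_le_of_ne (not_lt.mp hb) hβ
  obtain ⟨C, δ, hδ, hC⟩ := hνO
  set C' : ℝ := |C| + 1 with hC'def
  have hC'pos : 0 < C' := by positivity
  have hC'bound : ∀ q ∈ Icc (0:ℝ) 1 ×ˢ Icc (0:ℝ) 1, ‖q‖ < δ →
      |ν q| ≤ C' * (q.1 ^ 2 * q.2 + q.1 * q.2 ^ 2 + (q.1 + q.2) ^ 4) := by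
    intro q hq hq'
    refine (hC q hq hq').trans ?_
    have h1 : (0:ℝ) ≤ q.1 := hq.1.1
    have h2 : (0:ℝ) ≤ q.2 := hq.2.1
    have hX : 0 ≤ q.1 ^ 2 * q.2 + q.1 * q.2 ^ 2 + (q.1 + q.2) ^ 4 := by positivity
    have hCC' : C ≤ C' := by
      have := le_abs_self C
      simp only [hC'def]; linarith
    nlinarith
  set K : ℝ := 2 * |β| + 2 * |γ| + 18 * C' + 1 with hK
  have hKpos : 0 < K := by positivity
  have hβ2 : (0:ℝ) < -2 * β / C' := by
    apply div_pos (by linarith) hC'pos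
  set t : ℝ := min (min 1 (δ / 2)) (min (4 / K) (-2 * β / C')) / 2 with ht
  have htpos : 0 < t := by
    apply half_pos
    exact lt_min (lt_min one_pos (by positivity)) (lt_min (by positivity) hβ2)
  have ht1 : t ≤ 1 := by
    have : min (min 1 (δ / 2)) (min (4 / K) (-2 * β / C')) ≤ 1 :=
      (min_le_left _ _).trans (min_le_left _ _)
    simp only [ht]; linarith
  have htδ : t < δ := by
    have : min (min 1 (δ / 2)) (min (4 / K) (-2 * β / C')) ≤ δ / 2 :=
      (min_le_left _ _).trans (min_le_right _ _)
    simp only [ht]; linarith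
  have ht4K : t < 4 / K := by
    have h1 : min (min 1 (δ / 2)) (min (4 / K) (-2 * β / C')) ≤ 4 / K :=
      (min_le_right _ _).trans (min_le_left _ _)
    have h2 : 0 < 4 / K := by positivity
    simp only [ht]; linarith
  have htβ : t < -2 * β / C' := by
    have h1 : min (min 1 (δ / 2)) (min (4 / K) (-2 * β / C')) ≤ -2 * β / C' :=
      (min_le_right _ _).trans (min_le_right _ _)
    simp only [ht]; linarith
  -- points (t, s) with s ∈ [0, t] lie in the square, have norm < δ, and avoid the origin
  have hmem : ∀ s : ℝ, 0 ≤ s → s ≤ t →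
      ((t, s) : ℝ × ℝ) ∈ Icc (0:ℝ) 1 ×ˢ Icc (0:ℝ) 1 := by
    intro s hs hst
    exact ⟨⟨htpos.le, ht1⟩, ⟨hs, hst.trans ht1⟩⟩
  have hnorm : ∀ s : ℝ, 0 ≤ s → s ≤ t → ‖((t, s) : ℝ × ℝ)‖ < δ := by
    intro s hs hst
    have : ‖((t, s) : ℝ × ℝ)‖ = max |t| |s| := by
      simp [Prod.norm_def, Real.norm_eq_abs]
    rw [this, abs_of_nonneg htpos.le, abs_of_nonneg hs]
    exact lt_of_le_of_lt (max_le le_rfl hst) htδ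
  -- continuity of μ on the square
  have hμeq : μ = fun q : ℝ × ℝ =>
      4 * q.1 * q.2 + 2 * β * q.1 ^ 3 + 2 * γ * q.2 ^ 3 + ν q := funext hμ
  have hμc : ContinuousOn μ (Icc (0:ℝ) 1 ×ˢ Icc (0:ℝ) 1) := by
    rw [hμeq]
    exact (Continuous.continuousOn (by fun_prop)).add hνc
  set g : ℝ → ℝ := fun s => μ (t, s) with hg
  have hgc : ContinuousOn g (Icc 0 t) := by
    apply hμc.comp (Continuous.continuousOn (by fun_prop))
    intro s hs
    exact hmem s hs.1 hs.2
  have hne : ∀ s ∈ Icc (0:ℝ) t, g s ≠ 0 := by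
    intro s hs
    apply hnz (t, s)
    refine ⟨hmem s hs.1 hs.2, ?_⟩
    simp only [mem_singleton_iff, Prod.mk.injEq, not_and]
    intro h; exact absurd h htpos.ne'
  -- g t > 0
  have hνtt := hC'bound (t, t) (hmem t htpos.le le_rfl) (hnorm t htpos.le le_rfl)
  have hgt : 0 < g t := by
    have habs : ν (t, t) ≥ -(C' * (t ^ 2 * t + t * t ^ 2 + (t + t) ^ 4)) := by
      have := abs_le.mp hνtt
      linarith [this.1]
    have hβa : 2 * β * t ^ 3 ≥ -(2 * |β|) * t ^ 3 := by
      have h1 : -|β| ≤ β := neg_abs_le β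
      nlinarith [pow_pos htpos 3]
    have hγa : 2 * γ * t ^ 3 ≥ -(2 * |γ|) * t ^ 3 := by
      have h1 : -|γ| ≤ γ := neg_abs_le γ
      nlinarith [pow_pos htpos 3]
    have ht4 : t ^ 4 ≤ t ^ 3 := by nlinarith [pow_pos htpos 3]
    have hKt : K * t < 4 := by
      rw [lt_div_iff₀ hKpos] at ht4K; linarith
    have hgval : g t = 4 * t * t + 2 * β * t ^ 3 + 2 * γ * t ^ 3 + ν (t, t) := hμ (t, t)
    rw [hgval]
    nlinarith [sq_nonneg t, pow_pos htpos 2, pow_pos htpos 3, abs_nonneg β, abs_nonneg γ]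
  -- g 0 > 0 by IVT
  have hg0 : 0 < g 0 := by
    by_contra h0
    push_neg at h0
    have := intermediate_value_Icc htpos.le hgc
    have h0mem : (0:ℝ) ∈ Icc (g 0) (g t) := ⟨h0, hgt.le⟩
    obtain ⟨s, hs, hgs⟩ := this h0mem
    exact hne s hs hgs
  -- but g 0 < 0, contradiction
  have hνt0 := hC'bound (t, 0) (hmem 0 le_rfl htpos.le) (hnorm 0 le_rfl htpos.le)
  have hgval : g 0 = 4 * t * 0 + 2 * β * t ^ 3 + 2 * γ * 0 ^ 3 + ν (t, 0) := hμ (t, 0)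
  have hνt0' : |ν (t, 0)| ≤ C' * t ^ 4 := by
    have : t ^ 2 * 0 + t * 0 ^ 2 + (t + 0) ^ 4 = t ^ 4 := by ring
    rwa [this] at hνt0
  have hCt : C' * t < -2 * β := by
    rw [lt_div_iff₀ hC'pos] at htβ; linarith
  have : g 0 < 0 := by
    rw [hgval]
    have hub : ν (t, 0) ≤ C' * t ^ 4 := (abs_le.mp hνt0').2
    have hmul : (C' * t) * t ^ 3 < (-2 * β) * t ^ 3 :=
      mul_lt_mul_of_pos_right hCt (pow_pos htpos 3)
    have hid : C' * t ^ 4 = (C' * t) * t ^ 3 := by ring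
    have hid2 : (4:ℝ) * t * 0 + 2 * β * t ^ 3 + 2 * γ * 0 ^ 3 + ν (t, 0)
        = 2 * β * t ^ 3 + ν (t, 0) := by ring
    rw [hid2]
    linarith
  linarith
end

section
/- Let μ > 0 on Σ* = [0,1]² \ {(0,0)} be as in the Jacobian lemma (μ = 4uv + 2βu³ + 2γv³ + O(u²v+uv²+(u+v)⁴) with β, γ > 0), let ℓ ∈ ℕ, r ∈ ℕ, and let P be a polynomial all of whose monomial coefficients P_{jk} with weight w(j,k) := j + k + min{j,k} ≤ r vanish. Then for every p ∈ [6/(3ℓ−r), 6/(3ℓ−1−r)), the function μ^{−ℓ}P lies in the weighted Lebesgue space L^p(Σ, μ), i.e. ∫_Σ |μ^{−ℓ}P|^p μ < ∞. -/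
open MeasureTheory Set

lemma comparable (β γ : ℝ) (hβ : 0 < β) (hγ : 0 < γ) (ν μ : ℝ × ℝ → ℝ)
    (hνc : ContinuousOn ν (Icc (0:ℝ) 1 ×ˢ Icc (0:ℝ) 1))
    (hνO : ∃ C δ : ℝ, 0 < δ ∧ ∀ q ∈ Icc (0:ℝ) 1 ×ˢ Icc (0:ℝ) 1, ‖q‖ < δ →
      |ν q| ≤ C * (q.1 ^ 2 * q.2 + q.1 * q.2 ^ 2 + (q.1 + q.2) ^ 4))
    (hμ : ∀ q : ℝ × ℝ, μ q = 4 * q.1 * q.2 + 2 * β * q.1 ^ 3 + 2 * γ * q.2 ^ 3 + ν q)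
    (hpos : ∀ q ∈ (Icc (0:ℝ) 1 ×ˢ Icc (0:ℝ) 1) \ {((0:ℝ), (0:ℝ))}, 0 < μ q) :
    ∃ c₁ c₂ : ℝ, 0 < c₁ ∧ 0 < c₂ ∧ ∀ q ∈ Icc (0:ℝ) 1 ×ˢ Icc (0:ℝ) 1,
      c₁ * (q.1 * q.2 + q.1 ^ 3 + q.2 ^ 3) ≤ μ q ∧
      μ q ≤ c₂ * (q.1 * q.2 + q.1 ^ 3 + q.2 ^ 3) := by
  obtain ⟨C, δ, hδ, hC⟩ := hνO
  set C' : ℝ := max C 1 with hC'def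
  have hC'1 : (1:ℝ) ≤ C' := le_max_right _ _
  have hC'0 : 0 < C' := lt_of_lt_of_le one_pos hC'1
  set c₀ : ℝ := min 4 (min (2*β) (2*γ)) with hc₀def
  have hc₀ : 0 < c₀ := by
    simp only [hc₀def, lt_min_iff]
    refine ⟨by norm_num, by linarith, by linarith⟩
  have hc₀4 : c₀ ≤ 4 := min_le_left _ _
  have hc₀β : c₀ ≤ 2*β := le_trans (min_le_right _ _) (min_le_left _ _)
  have hc₀γ : c₀ ≤ 2*γ := le_trans (min_le_right _ _) (min_le_right _ _)
  set δ' : ℝ := min (min δ 1) (c₀ / (16 * C')) with hδ'def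
  have hδ'0 : 0 < δ' := by
    simp only [hδ'def, lt_min_iff]
    exact ⟨⟨hδ, one_pos⟩, by positivity⟩
  have hδ'δ : δ' ≤ δ := le_trans (min_le_left _ _) (min_le_left _ _)
  have hδ'1 : δ' ≤ 1 := le_trans (min_le_left _ _) (min_le_right _ _)
  have hδ'c : δ' ≤ c₀ / (16 * C') := min_le_right _ _
  have hCle : C ≤ C' := le_max_left _ _
  clear_value C' c₀ δ'
  clear hC'def hc₀def hδ'def
  -- near-origin bound on ν
  have hnear : ∀ q ∈ Icc (0:ℝ) 1 ×ˢ Icc (0:ℝ) 1, ‖q‖ < δ' →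
      |ν q| ≤ (c₀/2) * (q.1 * q.2 + q.1 ^ 3 + q.2 ^ 3) := by
    intro q hq hqn
    obtain ⟨⟨hu0, hu1⟩, hv0, hv1⟩ := hq
    have hb := hC q ⟨⟨hu0, hu1⟩, hv0, hv1⟩ (lt_of_lt_of_le hqn hδ'δ)
    have huδ : q.1 < δ' := by
      calc q.1 = |q.1| := (abs_of_nonneg hu0).symm
        _ = ‖q.1‖ := rfl
        _ ≤ ‖q‖ := norm_fst_le q
        _ < δ' := hqn
    have hvδ : q.2 < δ' := by
      calc q.2 = |q.2| := (abs_of_nonneg hv0).symm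
        _ = ‖q.2‖ := rfl
        _ ≤ ‖q‖ := norm_snd_le q
        _ < δ' := hqn
    have hterm : q.1 ^ 2 * q.2 + q.1 * q.2 ^ 2 + (q.1 + q.2) ^ 4
        ≤ 8 * δ' * (q.1 * q.2 + q.1 ^ 3 + q.2 ^ 3) := by
      nlinarith [mul_nonneg hu0 hv0, sq_nonneg (q.1 - q.2), sq_nonneg (q.1 + q.2),
        mul_nonneg (mul_nonneg hu0 hu0) hv0, mul_nonneg hu0 (mul_nonneg hv0 hv0),
        pow_nonneg hu0 3, pow_nonneg hv0 3, mul_pos hδ'0 hδ'0]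
    have hCC' : C * (q.1 ^ 2 * q.2 + q.1 * q.2 ^ 2 + (q.1 + q.2) ^ 4)
        ≤ C' * (q.1 ^ 2 * q.2 + q.1 * q.2 ^ 2 + (q.1 + q.2) ^ 4) := by
      apply mul_le_mul_of_nonneg_right hCle
      positivity
    have h8 : 8 * δ' * C' ≤ c₀ / 2 := by
      have := mul_le_mul_of_nonneg_right hδ'c (le_of_lt hC'0)
      rw [div_mul_eq_mul_div] at this
      calc 8 * δ' * C' = 8 * (δ' * C') := by ring
        _ ≤ 8 * (c₀ * C' / (16 * C')) := by
            apply mul_le_mul_of_nonneg_left _ (by norm_num)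
            calc δ' * C' ≤ (c₀ / (16 * C')) * C' := mul_le_mul_of_nonneg_right hδ'c hC'0.le
              _ = c₀ * C' / (16 * C') := by ring
        _ = c₀ / 2 := by field_simp; ring
    have hm0 : 0 ≤ q.1 * q.2 + q.1 ^ 3 + q.2 ^ 3 := by positivity
    calc |ν q| ≤ C * (q.1 ^ 2 * q.2 + q.1 * q.2 ^ 2 + (q.1 + q.2) ^ 4) := hb
      _ ≤ C' * (q.1 ^ 2 * q.2 + q.1 * q.2 ^ 2 + (q.1 + q.2) ^ 4) := hCC'
      _ ≤ C' * (8 * δ' * (q.1 * q.2 + q.1 ^ 3 + q.2 ^ 3)) :=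
          mul_le_mul_of_nonneg_left hterm hC'0.le
      _ = (8 * δ' * C') * (q.1 * q.2 + q.1 ^ 3 + q.2 ^ 3) := by ring
      _ ≤ (c₀/2) * (q.1 * q.2 + q.1 ^ 3 + q.2 ^ 3) :=
          mul_le_mul_of_nonneg_right h8 hm0
  -- continuity of μ on the square
  have hμc : ContinuousOn μ (Icc (0:ℝ) 1 ×ˢ Icc (0:ℝ) 1) := by
    have : ContinuousOn (fun q : ℝ × ℝ =>
        4 * q.1 * q.2 + 2 * β * q.1 ^ 3 + 2 * γ * q.2 ^ 3 + ν q)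
        (Icc (0:ℝ) 1 ×ˢ Icc (0:ℝ) 1) := by
      apply ContinuousOn.add _ hνc
      fun_prop
    exact this.congr (fun q _ => hμ q)
  set K : Set (ℝ × ℝ) := (Icc (0:ℝ) 1 ×ˢ Icc (0:ℝ) 1) ∩ {q | δ' ≤ ‖q‖} with hKdef
  have hKc : IsCompact K :=
    (isCompact_Icc.prod isCompact_Icc).inter_right
      (isClosed_le continuous_const continuous_norm)
  have hKne : K.Nonempty := by
    refine ⟨((1:ℝ), (1:ℝ)), ⟨⟨by norm_num, by norm_num⟩, ?_⟩⟩
    show δ' ≤ ‖(((1:ℝ),(1:ℝ)) : ℝ×ℝ)‖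
    calc δ' ≤ 1 := hδ'1
      _ = ‖((1:ℝ),(1:ℝ)).1‖ := by norm_num
      _ ≤ ‖(((1:ℝ),(1:ℝ)) : ℝ×ℝ)‖ := norm_fst_le _
  obtain ⟨q₀, hq₀K, hq₀min⟩ := hKc.exists_isMinOn hKne (hμc.mono inter_subset_left)
  have hq₀pos : 0 < μ q₀ := by
    apply hpos q₀
    refine ⟨hq₀K.1, ?_⟩
    simp only [mem_singleton_iff]
    intro h
    have h2 : δ' ≤ ‖q₀‖ := hq₀K.2
    rw [h] at h2
    simp only [Prod.norm_def, norm_zero, max_self] at h2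
    linarith
  obtain ⟨Mν, hMν⟩ := (isCompact_Icc.prod isCompact_Icc).exists_bound_of_continuousOn hνc
  clear hνc hμc hC hpos hKc
  have hMν' : 0 ≤ max Mν 0 := le_max_right _ _
  refine ⟨min (c₀/2) (μ q₀/3), max (4 + 2*β + 2*γ + c₀/2) ((4 + 2*β + 2*γ + max Mν 0) / δ'^3),
    lt_min (by linarith) (by linarith), lt_of_lt_of_le (by linarith) (le_max_left _ _), ?_⟩
  intro q hq
  obtain ⟨⟨hu0, hu1⟩, hv0, hv1⟩ := hq
  have hm0 : (0:ℝ) ≤ q.1 * q.2 + q.1 ^ 3 + q.2 ^ 3 := by positivity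
  have key1 : q.1 * q.2 ≤ 1 := mul_le_one₀ hu1 hv0 hv1
  have key2 : q.1 ^ 3 ≤ 1 := pow_le_one₀ hu0 hu1
  have key3 : q.2 ^ 3 ≤ 1 := pow_le_one₀ hv0 hv1
  have hm3 : q.1 * q.2 + q.1 ^ 3 + q.2 ^ 3 ≤ 3 := by linarith
  by_cases hcase : ‖q‖ < δ'
  · have hν := hnear q ⟨⟨hu0, hu1⟩, hv0, hv1⟩ hcase
    have hν1 := (abs_le.1 hν).1
    have hν2 := (abs_le.1 hν).2
    have h4 := mul_le_mul_of_nonneg_right hc₀4 (mul_nonneg hu0 hv0)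
    have hb := mul_le_mul_of_nonneg_right hc₀β (pow_nonneg hu0 3)
    have hg := mul_le_mul_of_nonneg_right hc₀γ (pow_nonneg hv0 3)
    constructor
    · calc min (c₀/2) (μ q₀/3) * (q.1 * q.2 + q.1 ^ 3 + q.2 ^ 3)
          ≤ (c₀/2) * (q.1 * q.2 + q.1 ^ 3 + q.2 ^ 3) :=
            mul_le_mul_of_nonneg_right (min_le_left _ _) hm0
        _ ≤ μ q := by rw [hμ q]; linarith
    · have e1 : 0 ≤ q.1 * q.2 := mul_nonneg hu0 hv0
      have e2 : 0 ≤ q.1 ^ 3 := pow_nonneg hu0 3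
      have e3 : 0 ≤ q.2 ^ 3 := pow_nonneg hv0 3
      have huv : q.1 * q.2 ≤ q.1 * q.2 + q.1 ^ 3 + q.2 ^ 3 := by linarith
      have hu3 : q.1 ^ 3 ≤ q.1 * q.2 + q.1 ^ 3 + q.2 ^ 3 := by linarith
      have hv3 : q.2 ^ 3 ≤ q.1 * q.2 + q.1 ^ 3 + q.2 ^ 3 := by linarith
      have b1 : 4*q.1*q.2 ≤ 4*(q.1 * q.2 + q.1 ^ 3 + q.2 ^ 3) := by linarith
      have b2 : 2*β*q.1^3 ≤ 2*β*(q.1 * q.2 + q.1 ^ 3 + q.2 ^ 3) :=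
        mul_le_mul_of_nonneg_left hu3 (by linarith)
      have b3 : 2*γ*q.2^3 ≤ 2*γ*(q.1 * q.2 + q.1 ^ 3 + q.2 ^ 3) :=
        mul_le_mul_of_nonneg_left hv3 (by linarith)
      calc μ q ≤ (4 + 2*β + 2*γ + c₀/2) * (q.1 * q.2 + q.1 ^ 3 + q.2 ^ 3) := by
            rw [hμ q]; linarith
        _ ≤ max (4 + 2*β + 2*γ + c₀/2) ((4 + 2*β + 2*γ + max Mν 0) / δ'^3)
              * (q.1 * q.2 + q.1 ^ 3 + q.2 ^ 3) :=
            mul_le_mul_of_nonneg_right (le_max_left _ _) hm0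
  · push_neg at hcase
    have hqK : q ∈ K := ⟨⟨⟨hu0, hu1⟩, hv0, hv1⟩, hcase⟩
    have hmin : μ q₀ ≤ μ q := hq₀min hqK
    have hmlow : δ' ^ 3 ≤ q.1 * q.2 + q.1 ^ 3 + q.2 ^ 3 := by
      have hn : ‖q‖ = max q.1 q.2 := by
        rw [Prod.norm_def, Real.norm_of_nonneg hu0, Real.norm_of_nonneg hv0]
      rw [hn] at hcase
      have e1 : 0 ≤ q.1 * q.2 := mul_nonneg hu0 hv0
      have e2 : 0 ≤ q.1 ^ 3 := pow_nonneg hu0 3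
      have e3 : 0 ≤ q.2 ^ 3 := pow_nonneg hv0 3
      rcases le_max_iff.1 hcase with h | h
      · have h3 := pow_le_pow_left₀ hδ'0.le h 3
        linarith
      · have h3 := pow_le_pow_left₀ hδ'0.le h 3
        linarith
    constructor
    · calc min (c₀/2) (μ q₀/3) * (q.1 * q.2 + q.1 ^ 3 + q.2 ^ 3)
          ≤ (μ q₀/3) * (q.1 * q.2 + q.1 ^ 3 + q.2 ^ 3) :=
            mul_le_mul_of_nonneg_right (min_le_right _ _) hm0
        _ ≤ (μ q₀/3) * 3 := by
            apply mul_le_mul_of_nonneg_left hm3 (by linarith)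
        _ = μ q₀ := by ring
        _ ≤ μ q := hmin
    · have hνb : |ν q| ≤ max Mν 0 := by
        have := hMν q ⟨⟨hu0, hu1⟩, hv0, hv1⟩
        rw [Real.norm_eq_abs] at this
        exact le_trans this (le_max_left _ _)
      have hbig : μ q ≤ 4 + 2*β + 2*γ + max Mν 0 := by
        rw [hμ q]
        have h2 := (abs_le.1 hνb).2
        have h3 : 2*β*q.1^3 ≤ 2*β*1 := mul_le_mul_of_nonneg_left key2 (by linarith)
        have h4 : 2*γ*q.2^3 ≤ 2*γ*1 := mul_le_mul_of_nonneg_left key3 (by linarith)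
        linarith
      calc μ q ≤ 4 + 2*β + 2*γ + max Mν 0 := hbig
        _ = ((4 + 2*β + 2*γ + max Mν 0) / δ'^3) * δ'^3 := by field_simp
        _ ≤ ((4 + 2*β + 2*γ + max Mν 0) / δ'^3) * (q.1 * q.2 + q.1 ^ 3 + q.2 ^ 3) := by
            apply mul_le_mul_of_nonneg_left hmlow (by positivity)
        _ ≤ max (4 + 2*β + 2*γ + c₀/2) ((4 + 2*β + 2*γ + max Mν 0) / δ'^3)
              * (q.1 * q.2 + q.1 ^ 3 + q.2 ^ 3) :=
            mul_le_mul_of_nonneg_right (le_max_right _ _) hm0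


lemma monomial_le (u v : ℝ) (hu : 0 < u) (hv : 0 < v) (j k : ℕ) :
    u ^ j * v ^ k ≤ (u*v + u^3 + v^3) ^ (((j + k + min j k : ℕ) : ℝ)/3) := by
  set m : ℝ := u*v + u^3 + v^3 with hmdef
  have hm0 : 0 < m := by positivity
  have huv : u * v ≤ m := by nlinarith [pow_pos hu 3, pow_pos hv 3]
  have hu3 : u ^ 3 ≤ m := by nlinarith [mul_pos hu hv, pow_pos hv 3]
  have hv3 : v ^ 3 ≤ m := by nlinarith [mul_pos hu hv, pow_pos hu 3]
  set a := min j k with hadef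
  have haj : a ≤ j := min_le_left _ _
  have hak : a ≤ k := min_le_right _ _
  have hsplit : u ^ j * v ^ k = (u*v) ^ a * (u ^ (j - a) * v ^ (k - a)) := by
    calc u ^ j * v ^ k = u ^ (a + (j - a)) * v ^ (a + (k - a)) := by
          rw [Nat.add_sub_cancel' haj, Nat.add_sub_cancel' hak]
      _ = (u*v) ^ a * (u ^ (j - a) * v ^ (k - a)) := by
          rw [pow_add, pow_add, mul_pow]; ring
  have h1 : (u*v) ^ a ≤ m ^ ((a:ℝ)) := by
    rw [← Real.rpow_natCast (u*v) a]
    exact Real.rpow_le_rpow (le_of_lt (mul_pos hu hv)) huv (by positivity)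
  have h2 : u ^ (j - a) ≤ m ^ (((j - a : ℕ) : ℝ)/3) := by
    have : u ^ (j - a) = (u ^ 3) ^ (((j - a : ℕ) : ℝ)/3) := by
      rw [← Real.rpow_natCast u 3, ← Real.rpow_mul hu.le]
      rw [show (((3:ℕ)):ℝ) * (((j - a : ℕ) : ℝ)/3) = ((j - a : ℕ) : ℝ) by push_cast; ring]
      rw [Real.rpow_natCast]
    rw [this]
    exact Real.rpow_le_rpow (by positivity) hu3 (by positivity)
  have h3 : v ^ (k - a) ≤ m ^ (((k - a : ℕ) : ℝ)/3) := by
    have : v ^ (k - a) = (v ^ 3) ^ (((k - a : ℕ) : ℝ)/3) := by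
      rw [← Real.rpow_natCast v 3, ← Real.rpow_mul hv.le]
      rw [show (((3:ℕ)):ℝ) * (((k - a : ℕ) : ℝ)/3) = ((k - a : ℕ) : ℝ) by push_cast; ring]
      rw [Real.rpow_natCast]
    rw [this]
    exact Real.rpow_le_rpow (by positivity) hv3 (by positivity)
  calc u ^ j * v ^ k = (u*v) ^ a * (u ^ (j - a) * v ^ (k - a)) := hsplit
    _ ≤ m ^ ((a:ℝ)) * (m ^ (((j - a : ℕ) : ℝ)/3) * m ^ (((k - a : ℕ) : ℝ)/3)) := by
        apply mul_le_mul h1 (mul_le_mul h2 h3 (by positivity) (by positivity))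
          (by positivity) (by positivity)
    _ = m ^ ((a:ℝ) + (((j - a : ℕ) : ℝ)/3 + ((k - a : ℕ) : ℝ)/3)) := by
        rw [Real.rpow_add hm0, Real.rpow_add hm0]
    _ = m ^ (((j + k + a : ℕ) : ℝ)/3) := by
        congr 1
        have cj : ((j - a : ℕ) : ℝ) = (j:ℝ) - (a:ℝ) := by
          rw [Nat.cast_sub haj]
        have ck : ((k - a : ℕ) : ℝ) = (k:ℝ) - (a:ℝ) := by
          rw [Nat.cast_sub hak]
        rw [cj, ck]
        push_cast
        ring



set_option maxHeartbeats 1000000 in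
/-- Part a) of the leading-part lemma: with `μ = 4uv + 2βu³ + 2γv³ + ν` as in the
Jacobian lemma (`β, γ > 0`, `ν = O(u²v+uv²+(u+v)⁴)` near the origin, `ν`
continuous, `μ > 0` on `Σ* = [0,1]² \ {(0,0)}`), if every coefficient `P_{jk}` of
the polynomial `P` with weight `w(j,k) = j + k + min{j,k} ≤ r` vanishes, then for
every `p ∈ Π(r,ℓ)` (equivalently `r ≤ 3ℓ − 6/p < r + 1`) the function `μ^{−ℓ}P`
lies in `L^p(Σ, μ)`. -/
theorem stmt19 (β γ : ℝ) (hβ : 0 < β) (hγ : 0 < γ) (ν μ : ℝ × ℝ → ℝ)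
    (hνc : ContinuousOn ν (Icc (0:ℝ) 1 ×ˢ Icc (0:ℝ) 1))
    (hνO : ∃ C δ : ℝ, 0 < δ ∧ ∀ q ∈ Icc (0:ℝ) 1 ×ˢ Icc (0:ℝ) 1, ‖q‖ < δ →
      |ν q| ≤ C * (q.1 ^ 2 * q.2 + q.1 * q.2 ^ 2 + (q.1 + q.2) ^ 4))
    (hμ : ∀ q : ℝ × ℝ, μ q = 4 * q.1 * q.2 + 2 * β * q.1 ^ 3 + 2 * γ * q.2 ^ 3 + ν q)
    (hpos : ∀ q ∈ (Icc (0:ℝ) 1 ×ˢ Icc (0:ℝ) 1) \ {((0:ℝ), (0:ℝ))}, 0 < μ q)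
    (ℓ r D : ℕ) (P : ℕ → ℕ → ℝ)
    (hPdeg : ∀ j k, D < j + k → P j k = 0)
    (hP : ∀ j k, j + k + min j k ≤ r → P j k = 0)
    (p : ℝ) (hp : 1 ≤ p)
    (hpl : (r : ℝ) ≤ 3 * ℓ - 6 / p) (hpu : 3 * ℓ - 6 / p < r + 1) :
    (∫⁻ q in Icc (0:ℝ) 1 ×ˢ Icc (0:ℝ) 1,
      ENNReal.ofReal
        (|(∑ j ∈ Finset.range (D + 1), ∑ k ∈ Finset.range (D + 1),
            P j k * q.1 ^ j * q.2 ^ k) / μ q ^ ℓ| ^ p * μ q)) < ⊤ := by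
  obtain ⟨c₁, c₂, hc₁, hc₂, hcomp⟩ := comparable β γ hβ hγ ν μ hνc hνO hμ hpos
  have hp0 : (0:ℝ) < p := lt_of_lt_of_le one_pos hp
  set s : ℝ := ((r:ℝ)+1)/3 with hsdef
  set e : ℝ := s*p - (ℓ:ℝ)*p + 1 with hedef
  have hem : -1 < e := by
    have h1 : 3*(ℓ:ℝ) - ((r:ℝ)+1) < 6/p := by linarith
    have h2 : (3*(ℓ:ℝ) - ((r:ℝ)+1))*p < 6 := by
      calc (3*(ℓ:ℝ) - ((r:ℝ)+1))*p < (6/p)*p := mul_lt_mul_of_pos_right h1 hp0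
        _ = 6 := div_mul_cancel₀ 6 hp0.ne'
    rw [hedef, hsdef]
    nlinarith
  set t : ℝ := max (-e) 0 with htdef
  have ht0 : 0 ≤ t := le_max_right _ _
  have ht1 : t < 1 := max_lt (by linarith) one_pos
  have hte : e + t = max e 0 := by
    rcases le_total e 0 with h | h
    · rw [max_eq_right h, htdef, max_eq_left (by linarith)]; ring
    · rw [max_eq_left h, htdef, max_eq_right (by linarith)]; ring
  set A : ℝ := (∑ j ∈ Finset.range (D + 1), ∑ k ∈ Finset.range (D + 1), |P j k|) * 3^D
    with hAdef
  have hA0 : 0 ≤ A := by positivity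
  set C0 : ℝ := A ^ p * (c₁ ^ ℓ) ^ (-p) * c₂ with hC0def
  have hC00 : 0 ≤ C0 := by
    have h1 : (0:ℝ) ≤ A ^ p := Real.rpow_nonneg hA0 p
    have h2 : (0:ℝ) ≤ (c₁ ^ ℓ) ^ (-p) := Real.rpow_nonneg (pow_nonneg hc₁.le ℓ) _
    positivity
  set Cf : ℝ := C0 * 3 ^ (max e 0) with hCfdef
  -- pointwise bound
  have key : ∀ q ∈ Icc (0:ℝ) 1 ×ˢ Icc (0:ℝ) 1, 0 < q.1 → 0 < q.2 →
      |(∑ j ∈ Finset.range (D + 1), ∑ k ∈ Finset.range (D + 1),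
          P j k * q.1 ^ j * q.2 ^ k) / μ q ^ ℓ| ^ p * μ q
        ≤ Cf * (q.1 ^ (-t) * q.2 ^ (-t)) := by
    intro q hq hu hv
    have hq1 : q.1 ≤ 1 := hq.1.2
    have hq2 : q.2 ≤ 1 := hq.2.2
    set m : ℝ := q.1 * q.2 + q.1 ^ 3 + q.2 ^ 3 with hmdef
    have hm0 : 0 < m := by positivity
    have hm3 : m ≤ 3 := by
      have k1 : q.1 * q.2 ≤ 1 := mul_le_one₀ hq1 hv.le hq2
      have k2 : q.1 ^ 3 ≤ 1 := pow_le_one₀ hu.le hq1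
      have k3 : q.2 ^ 3 ≤ 1 := pow_le_one₀ hv.le hq2
      rw [hmdef]; linarith
    have hμpos : 0 < μ q := by
      apply hpos q
      refine ⟨hq, ?_⟩
      simp only [mem_singleton_iff]
      intro h
      rw [h] at hu
      simp at hu
    obtain ⟨hlow, hhigh⟩ := hcomp q hq
    -- sum bound
    have hsum : |∑ j ∈ Finset.range (D + 1), ∑ k ∈ Finset.range (D + 1),
        P j k * q.1 ^ j * q.2 ^ k| ≤ A * m ^ s := by
      have hstep : |∑ j ∈ Finset.range (D + 1), ∑ k ∈ Finset.range (D + 1),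
          P j k * q.1 ^ j * q.2 ^ k|
          ≤ ∑ j ∈ Finset.range (D + 1), ∑ k ∈ Finset.range (D + 1),
            |P j k| * ((3:ℝ)^D * m ^ s) := by
        refine (Finset.abs_sum_le_sum_abs _ _).trans (Finset.sum_le_sum fun j hj => ?_)
        refine (Finset.abs_sum_le_sum_abs _ _).trans (Finset.sum_le_sum fun k hk => ?_)
        by_cases hz : P j k = 0
        · simp only [hz, zero_mul, abs_zero, abs_of_nonneg]
          positivity
        · have hjk : j + k ≤ D := by
            by_contra h
            exact hz (hPdeg j k (by omega))
          have hw : r + 1 ≤ j + k + min j k := by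
            by_contra h
            exact hz (hP j k (by omega))
          have hminj : min j k ≤ j := min_le_left _ _
          have hwD : ((j + k + min j k : ℕ) : ℝ) ≤ 2*(D:ℝ) := by
            have h2 : (j + k + min j k : ℕ) ≤ 2*D := by omega
            exact_mod_cast h2
          have hwr : ((r:ℝ)+1) ≤ ((j + k + min j k : ℕ) : ℝ) := by
            exact_mod_cast hw
          have hD0 : (0:ℝ) ≤ (D:ℝ) := Nat.cast_nonneg D
          have hmono := monomial_le q.1 q.2 hu hv j k
          rw [← hmdef] at hmono
          have hsplitw : m ^ (((j + k + min j k : ℕ) : ℝ)/3)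
              = m ^ ((((j + k + min j k : ℕ) : ℝ) - ((r:ℝ)+1))/3) * m ^ s := by
            rw [← Real.rpow_add hm0, hsdef]
            congr 1
            ring
          have hb1 : m ^ ((((j + k + min j k : ℕ) : ℝ) - ((r:ℝ)+1))/3)
              ≤ (3:ℝ) ^ ((((j + k + min j k : ℕ) : ℝ) - ((r:ℝ)+1))/3) :=
            Real.rpow_le_rpow hm0.le hm3 (by linarith)
          have hb2 : (3:ℝ) ^ ((((j + k + min j k : ℕ) : ℝ) - ((r:ℝ)+1))/3)
              ≤ (3:ℝ) ^ ((D:ℝ)) :=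
            Real.rpow_le_rpow_of_exponent_le (by norm_num) (by linarith)
          have h3D : (3:ℝ) ^ ((D:ℝ)) = (3:ℝ)^D := Real.rpow_natCast 3 D
          calc |P j k * q.1 ^ j * q.2 ^ k| = |P j k| * (q.1 ^ j * q.2 ^ k) := by
                rw [abs_mul, abs_mul, abs_pow, abs_pow, abs_of_nonneg hu.le,
                  abs_of_nonneg hv.le, mul_assoc]
            _ ≤ |P j k| * ((3:ℝ)^D * m ^ s) := by
                apply mul_le_mul_of_nonneg_left _ (abs_nonneg _)
                calc q.1 ^ j * q.2 ^ k ≤ m ^ (((j + k + min j k : ℕ) : ℝ)/3) := hmono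
                  _ = m ^ ((((j + k + min j k : ℕ) : ℝ) - ((r:ℝ)+1))/3) * m ^ s := hsplitw
                  _ ≤ (3:ℝ) ^ ((D:ℝ)) * m ^ s :=
                      mul_le_mul_of_nonneg_right (hb1.trans hb2)
                        (Real.rpow_nonneg hm0.le _)
                  _ = (3:ℝ)^D * m ^ s := by rw [h3D]
      calc |∑ j ∈ Finset.range (D + 1), ∑ k ∈ Finset.range (D + 1),
            P j k * q.1 ^ j * q.2 ^ k|
          ≤ ∑ j ∈ Finset.range (D + 1), ∑ k ∈ Finset.range (D + 1),
            |P j k| * ((3:ℝ)^D * m ^ s) := hstep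
        _ = A * m ^ s := by
            simp only [← Finset.sum_mul]
            rw [hAdef]
            ring
    -- main chain
    have hc₁m : (0:ℝ) < c₁ * m := mul_pos hc₁ hm0
    have hden : (c₁ * m) ^ ℓ ≤ μ q ^ ℓ := pow_le_pow_left₀ hc₁m.le hlow ℓ
    have habs : |(∑ j ∈ Finset.range (D + 1), ∑ k ∈ Finset.range (D + 1),
        P j k * q.1 ^ j * q.2 ^ k) / μ q ^ ℓ|
        = |∑ j ∈ Finset.range (D + 1), ∑ k ∈ Finset.range (D + 1),
            P j k * q.1 ^ j * q.2 ^ k| / μ q ^ ℓ := by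
      rw [abs_div, abs_pow, abs_of_pos hμpos]
    have hfrac : |∑ j ∈ Finset.range (D + 1), ∑ k ∈ Finset.range (D + 1),
        P j k * q.1 ^ j * q.2 ^ k| / μ q ^ ℓ ≤ (A * m ^ s) / ((c₁ * m) ^ ℓ) :=
      div_le_div₀ (by positivity) hsum (pow_pos hc₁m ℓ) hden
    have hr1 : |(∑ j ∈ Finset.range (D + 1), ∑ k ∈ Finset.range (D + 1),
        P j k * q.1 ^ j * q.2 ^ k) / μ q ^ ℓ| ^ p
        ≤ ((A * m ^ s) / ((c₁ * m) ^ ℓ)) ^ p := by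
      rw [habs]
      exact Real.rpow_le_rpow (by positivity) hfrac hp0.le
    have hmulμ : |(∑ j ∈ Finset.range (D + 1), ∑ k ∈ Finset.range (D + 1),
        P j k * q.1 ^ j * q.2 ^ k) / μ q ^ ℓ| ^ p * μ q
        ≤ ((A * m ^ s) / ((c₁ * m) ^ ℓ)) ^ p * (c₂ * m) :=
      mul_le_mul hr1 hhigh hμpos.le (Real.rpow_nonneg (by positivity) p)
    have hc₁ℓ : (0:ℝ) < c₁ ^ ℓ := pow_pos hc₁ ℓ
    have heq : ((A * m ^ s) / ((c₁ * m) ^ ℓ)) ^ p * (c₂ * m) = C0 * m ^ e := by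
      have e1 : (c₁ * m) ^ ℓ = c₁ ^ ℓ * m ^ ((ℓ:ℕ):ℝ) := by
        rw [mul_pow, Real.rpow_natCast m ℓ]
      have e2 : (A * m ^ s) / (c₁ ^ ℓ * m ^ ((ℓ:ℕ):ℝ)) = (A / c₁ ^ ℓ) * m ^ (s - ((ℓ:ℕ):ℝ)) := by
        rw [Real.rpow_sub hm0]
        field_simp
      have e3 : ((A / c₁ ^ ℓ) * m ^ (s - ((ℓ:ℕ):ℝ))) ^ p
          = (A / c₁ ^ ℓ) ^ p * m ^ ((s - ((ℓ:ℕ):ℝ)) * p) := by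
        rw [Real.mul_rpow (by positivity) (Real.rpow_nonneg hm0.le _), ← Real.rpow_mul hm0.le]
      have e4 : (A / c₁ ^ ℓ) ^ p = A ^ p * (c₁ ^ ℓ) ^ (-p) := by
        rw [Real.div_rpow hA0 hc₁ℓ.le, Real.rpow_neg hc₁ℓ.le, div_eq_mul_inv]
      calc ((A * m ^ s) / ((c₁ * m) ^ ℓ)) ^ p * (c₂ * m)
          = ((A / c₁ ^ ℓ) * m ^ (s - ((ℓ:ℕ):ℝ))) ^ p * (c₂ * m) := by rw [e1, e2]
        _ = (A ^ p * (c₁ ^ ℓ) ^ (-p)) * m ^ ((s - ((ℓ:ℕ):ℝ)) * p) * (c₂ * m) := by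
            rw [e3, e4]
        _ = C0 * (m ^ ((s - ((ℓ:ℕ):ℝ)) * p) * m) := by rw [hC0def]; ring
        _ = C0 * m ^ ((s - ((ℓ:ℕ):ℝ)) * p + 1) := by rw [Real.rpow_add_one hm0.ne']
        _ = C0 * m ^ e := by
            rw [show (s - ((ℓ:ℕ):ℝ)) * p + 1 = e from by rw [hedef]; ring]
    have hstep6 : C0 * m ^ e ≤ Cf * (q.1 ^ (-t) * q.2 ^ (-t)) := by
      have h1 : m ^ e = m ^ (e+t) * m ^ (-t) := by
        rw [← Real.rpow_add hm0]
        congr 1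
        ring
      have h2 : m ^ (e+t) ≤ (3:ℝ) ^ (max e 0) := by
        rw [hte]
        exact Real.rpow_le_rpow hm0.le hm3 (le_max_right _ _)
      have huvm : q.1 * q.2 ≤ m := by
        rw [hmdef]
        nlinarith [pow_pos hu 3, pow_pos hv 3]
      have h3 : m ^ (-t) ≤ (q.1 * q.2) ^ (-t) :=
        Real.rpow_le_rpow_of_nonpos (mul_pos hu hv) huvm (neg_nonpos.2 ht0)
      have h4 : (q.1 * q.2) ^ (-t) = q.1 ^ (-t) * q.2 ^ (-t) :=
        Real.mul_rpow hu.le hv.le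
      have h5 : m ^ e ≤ (3:ℝ) ^ (max e 0) * (q.1 ^ (-t) * q.2 ^ (-t)) := by
        rw [h1, ← h4]
        exact mul_le_mul h2 h3 (Real.rpow_nonneg hm0.le _) (Real.rpow_nonneg (by norm_num) _)
      calc C0 * m ^ e ≤ C0 * ((3:ℝ) ^ (max e 0) * (q.1 ^ (-t) * q.2 ^ (-t))) :=
            mul_le_mul_of_nonneg_left h5 hC00
        _ = Cf * (q.1 ^ (-t) * q.2 ^ (-t)) := by rw [hCfdef]; ring
    calc |(∑ j ∈ Finset.range (D + 1), ∑ k ∈ Finset.range (D + 1),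
        P j k * q.1 ^ j * q.2 ^ k) / μ q ^ ℓ| ^ p * μ q
        ≤ ((A * m ^ s) / ((c₁ * m) ^ ℓ)) ^ p * (c₂ * m) := hmulμ
      _ = C0 * m ^ e := heq
      _ ≤ Cf * (q.1 ^ (-t) * q.2 ^ (-t)) := hstep6
  -- measure-theoretic part
  have hSm : MeasurableSet (Icc (0:ℝ) 1 ×ˢ Icc (0:ℝ) 1) :=
    measurableSet_Icc.prod measurableSet_Icc
  have hint1 : IntegrableOn (fun x : ℝ => x ^ (-t)) (Icc (0:ℝ) 1) := by
    rw [integrableOn_Icc_iff_integrableOn_Ioo]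
    exact (intervalIntegral.integrableOn_Ioo_rpow_iff one_pos).2 (by linarith)
  have hint2 : IntegrableOn (fun q : ℝ × ℝ => q.1 ^ (-t) * q.2 ^ (-t))
      (Icc (0:ℝ) 1 ×ˢ Icc (0:ℝ) 1) := by
    have h := hint1.mul_prod hint1
    rwa [Measure.prod_restrict, ← Measure.volume_eq_prod] at h
  have hint : IntegrableOn (fun q : ℝ × ℝ => Cf * (q.1 ^ (-t) * q.2 ^ (-t)))
      (Icc (0:ℝ) 1 ×ˢ Icc (0:ℝ) 1) := hint2.const_mul Cf
  have hae : ∀ᵐ q : ℝ × ℝ, q.1 ≠ 0 ∧ q.2 ≠ 0 := by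
    rw [ae_iff]
    have he : {q : ℝ × ℝ | ¬(q.1 ≠ 0 ∧ q.2 ≠ 0)}
        = (({(0:ℝ)} : Set ℝ) ×ˢ (univ : Set ℝ)) ∪ ((univ : Set ℝ) ×ˢ ({(0:ℝ)} : Set ℝ)) := by
      ext q
      obtain ⟨x, y⟩ := q
      by_cases h1 : x = 0 <;> by_cases h2 : y = 0 <;>
        simp [Set.mem_prod, h1, h2, not_and_or, Prod.ext_iff, eq_comm]
    rw [he]
    apply measure_union_null
    · rw [Measure.volume_eq_prod, Measure.prod_prod]; simp
    · rw [Measure.volume_eq_prod, Measure.prod_prod]; simp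
  have hbound : ∀ᵐ q ∂(volume.restrict (Icc (0:ℝ) 1 ×ˢ Icc (0:ℝ) 1)),
      ENNReal.ofReal (|(∑ j ∈ Finset.range (D + 1), ∑ k ∈ Finset.range (D + 1),
          P j k * q.1 ^ j * q.2 ^ k) / μ q ^ ℓ| ^ p * μ q)
        ≤ ENNReal.ofReal (Cf * (q.1 ^ (-t) * q.2 ^ (-t))) := by
    filter_upwards [ae_restrict_mem hSm, ae_restrict_of_ae hae] with q hqS hq0
    apply ENNReal.ofReal_le_ofReal
    exact key q hqS (lt_of_le_of_ne hqS.1.1 (Ne.symm hq0.1))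
      (lt_of_le_of_ne hqS.2.1 (Ne.symm hq0.2))
  exact lt_of_le_of_lt (lintegral_mono_ae hbound) hint.setLIntegral_lt_top
end
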